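/- arXiv:2402.02776 — 3 statements merged into one kernel-verified Lean document; each statement's English description precedes it below -/
import Mathlib

section
/- Let δ ≥ 1 be a real number and w ∈ C¹([0,1]) with w(0)=0. Then max_{x∈[0,1]} |w(x)| ≤ (δ+2)^{1/(δ+2)} · ‖w‖_{L^{2(δ+1)}}^{(δ+1)/(δ+2)} · ‖w'‖_{L²}^{1/(δ+2)}. -/
open MeasureTheory Set Real

lemma cs_interval (f g : ℝ → ℝ) (hf : ContinuousOn f (Set.Icc (0:ℝ) 1))
    (hg : ContinuousOn g (Set.Icc (0:ℝ) 1))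
    (hf0 : ∀ x, 0 ≤ f x) (hg0 : ∀ x, 0 ≤ g x) :
    ∫ y in (0:ℝ)..1, f y * g y ≤
      (∫ y in (0:ℝ)..1, f y ^ 2) ^ ((1:ℝ)/2) * (∫ y in (0:ℝ)..1, g y ^ 2) ^ ((1:ℝ)/2) := by
  have hmeas : MeasurableSet (Set.Ioc (0:ℝ) 1) := measurableSet_Ioc
  have hsub : Set.Ioc (0:ℝ) 1 ⊆ Set.Icc 0 1 := Set.Ioc_subset_Icc_self
  set μ := volume.restrict (Set.Ioc (0:ℝ) 1) with hμ
  have hpq : Real.HolderConjugate 2 2 := Real.HolderConjugate.two_two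
  have memf : MemLp f (ENNReal.ofReal 2) μ := by
    obtain ⟨C, hC⟩ := (isCompact_Icc.bddAbove_image hf.norm).imp (fun C hC => hC)
    refine MemLp.of_bound ((hf.mono hsub).aestronglyMeasurable hmeas) C ?_
    refine (ae_restrict_iff' hmeas).2 (Filter.Eventually.of_forall fun x hx => ?_)
    exact hC (Set.mem_image_of_mem _ (hsub hx))
  have memg : MemLp g (ENNReal.ofReal 2) μ := by
    obtain ⟨C, hC⟩ := (isCompact_Icc.bddAbove_image hg.norm).imp (fun C hC => hC)
    refine MemLp.of_bound ((hg.mono hsub).aestronglyMeasurable hmeas) C ?_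
    refine (ae_restrict_iff' hmeas).2 (Filter.Eventually.of_forall fun x hx => ?_)
    exact hC (Set.mem_image_of_mem _ (hsub hx))
  have H := MeasureTheory.integral_mul_le_Lp_mul_Lq_of_nonneg hpq
    (μ := μ) (Filter.Eventually.of_forall hf0) (Filter.Eventually.of_forall hg0) memf memg
  rw [intervalIntegral.integral_of_le (by norm_num : (0:ℝ) ≤ 1),
      intervalIntegral.integral_of_le (by norm_num : (0:ℝ) ≤ 1),
      intervalIntegral.integral_of_le (by norm_num : (0:ℝ) ≤ 1)]
  calc ∫ y in Set.Ioc (0:ℝ) 1, f y * g y = ∫ a, f a * g a ∂μ := rfl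
    _ ≤ (∫ a, f a ^ (2:ℝ) ∂μ) ^ ((1:ℝ)/2) * (∫ a, g a ^ (2:ℝ) ∂μ) ^ ((1:ℝ)/2) := H
    _ = _ := by
        congr 1
        · congr 1; refine integral_congr_ae (Filter.Eventually.of_forall fun x => ?_)
          show f x ^ (2:ℝ) = f x ^ (2:ℕ)
          rw [show ((2:ℝ)) = ((2:ℕ):ℝ) by norm_num, Real.rpow_natCast]
        · congr 1; refine integral_congr_ae (Filter.Eventually.of_forall fun x => ?_)
          show g x ^ (2:ℝ) = g x ^ (2:ℕ)
          rw [show ((2:ℝ)) = ((2:ℕ):ℝ) by norm_num, Real.rpow_natCast]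

/-- Sup-norm interpolation inequality:
`max_{x∈[0,1]} |w x| ≤ (δ+2)^{1/(δ+2)} ‖w‖_{L^{2(δ+1)}}^{(δ+1)/(δ+2)} ‖w'‖_{L²}^{1/(δ+2)}`
for real `δ ≥ 1` and `w ∈ C¹([0,1])` with `w 0 = 0`. -/
theorem sup_interpolation_unit_interval (δ : ℝ) (hδ : 1 ≤ δ) (w w' : ℝ → ℝ)
    (hderiv : ∀ x ∈ Set.Icc (0 : ℝ) 1, HasDerivAt w (w' x) x)
    (hcont : ContinuousOn w' (Set.Icc (0 : ℝ) 1))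
    (h0 : w 0 = 0) :
    ∀ x ∈ Set.Icc (0 : ℝ) 1,
      |w x| ≤ (δ + 2) ^ ((1 : ℝ) / (δ + 2)) *
        ((∫ y in (0 : ℝ)..1, |w y| ^ (2 * (δ + 1))) ^ (1 / (2 * (δ + 1)))) ^ ((δ + 1) / (δ + 2)) *
        ((∫ y in (0 : ℝ)..1, (w' y) ^ 2) ^ ((1 : ℝ) / 2)) ^ ((1 : ℝ) / (δ + 2)) := by
  intro x hx
  obtain ⟨hx0, hx1⟩ := hx
  have hδ2 : (0:ℝ) < δ + 2 := by linarith
  have hδ1 : (0:ℝ) < δ + 1 := by linarith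
  have hwc : ContinuousOn w (Set.Icc (0:ℝ) 1) := fun t ht =>
    (hderiv t ht).continuousAt.continuousWithinAt
  set p : ℝ := (δ + 2)/2 with hp
  have hp1 : 1 ≤ p := by rw [hp]; linarith
  -- the derivative of φ = (w²)^p
  have key : ∀ t ∈ Set.Icc (0:ℝ) 1, HasDerivAt (fun s => (w s ^ 2) ^ p)
      ((δ+2) * ((w t ^ 2) ^ (δ/2)) * (w t * w' t)) t := by
    intro t ht
    have h1 : HasDerivAt (fun s => w s ^ 2) (2 * w t * w' t) t := by
      simpa using (hderiv t ht).fun_pow 2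
    have h2 : HasDerivAt (fun y : ℝ => y ^ p) (p * (w t ^ 2) ^ (p - 1)) (w t ^ 2) :=
      Real.hasDerivAt_rpow_const (Or.inr hp1)
    have h3 := h2.comp t h1
    have hpe : p - 1 = δ/2 := by rw [hp]; ring
    exact h3.congr_deriv (by rw [hpe, hp]; ring)
  -- continuity facts
  have habs : ContinuousOn (fun t => |w t|) (Set.Icc (0:ℝ) 1) := hwc.abs
  have hsq : ContinuousOn (fun t => w t ^ 2) (Set.Icc (0:ℝ) 1) := hwc.pow 2
  have hφ' : ContinuousOn (fun t => (δ+2) * ((w t ^ 2) ^ (δ/2)) * (w t * w' t))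
      (Set.Icc (0:ℝ) 1) := by
    exact ((continuousOn_const.mul (hsq.rpow_const fun t ht => Or.inr (by positivity))).mul
      (hwc.mul hcont))
  have hG : ContinuousOn (fun t => |w t| ^ (δ+1)) (Set.Icc (0:ℝ) 1) :=
    habs.rpow_const fun t ht => Or.inr (by positivity)
  have hG' : ContinuousOn (fun t => (δ+2) * (|w t| ^ (δ+1) * |w' t|)) (Set.Icc (0:ℝ) 1) :=
    continuousOn_const.mul (hG.mul hcont.abs)
  have hsubx : Set.Icc (0:ℝ) x ⊆ Set.Icc 0 1 := Set.Icc_subset_Icc le_rfl hx1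
  -- FTC
  have hFTC : ∫ t in (0:ℝ)..x, (δ+2) * ((w t ^ 2) ^ (δ/2)) * (w t * w' t)
      = (w x ^ 2) ^ p - (w 0 ^ 2) ^ p := by
    apply intervalIntegral.integral_eq_sub_of_hasDerivAt
    · intro t ht
      rw [Set.uIcc_of_le hx0] at ht
      exact key t (hsubx ht)
    · exact ((hφ'.mono hsubx).mono (by rw [Set.uIcc_of_le hx0])).intervalIntegrable
  have hzero : (w 0 ^ 2) ^ p = 0 := by
    rw [h0]; simp [Real.zero_rpow (by positivity : p ≠ 0)]
  -- (w x²)^p = |w x|^(δ+2)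
  have hcomb : ∀ t, |w t| ^ δ * |w t| = |w t| ^ (δ+1) := by
    intro t
    rcases eq_or_ne (w t) 0 with h | h
    · simp [h, Real.zero_rpow (ne_of_gt (by linarith : (0:ℝ) < δ)),
        Real.zero_rpow (ne_of_gt hδ1)]
    · rw [Real.rpow_add (abs_pos.2 h), Real.rpow_one]
  have habs_eq : ∀ t, (w t ^ 2) ^ p = |w t| ^ (δ + 2) := by
    intro t
    rw [← sq_abs, ← Real.rpow_natCast |w t| 2, ← Real.rpow_mul (abs_nonneg _)]
    congr 1
    push_cast
    rw [hp]; ring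
  have habsδ : ∀ t, (w t ^ 2) ^ ((δ:ℝ)/2) = |w t| ^ δ := by
    intro t
    rw [← sq_abs, ← Real.rpow_natCast |w t| 2, ← Real.rpow_mul (abs_nonneg _)]
    congr 1
    push_cast
    ring
  -- pointwise bound
  have hpt : ∀ t ∈ Set.Icc (0:ℝ) x, (δ+2) * ((w t ^ 2) ^ (δ/2)) * (w t * w' t)
      ≤ (δ+2) * (|w t| ^ (δ+1) * |w' t|) := by
    intro t ht
    rw [habsδ t, mul_assoc]
    have h1 : |w t| ^ δ * (w t * w' t) ≤ |w t| ^ (δ+1) * |w' t| := by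
      have h2 : w t * w' t ≤ |w t| * |w' t| := by
        calc w t * w' t ≤ |w t * w' t| := le_abs_self _
          _ = |w t| * |w' t| := abs_mul _ _
      calc |w t| ^ δ * (w t * w' t) ≤ |w t| ^ δ * (|w t| * |w' t|) :=
            mul_le_mul_of_nonneg_left h2 (Real.rpow_nonneg (abs_nonneg _) _)
        _ = (|w t| ^ δ * |w t|) * |w' t| := by ring
        _ = |w t| ^ (δ+1) * |w' t| := by rw [hcomb t]
    exact mul_le_mul_of_nonneg_left h1 (le_of_lt hδ2)
  -- integral bounds
  have hint1 : IntervalIntegrable (fun t => (δ+2) * ((w t ^ 2) ^ (δ/2)) * (w t * w' t))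
      volume 0 x := ((hφ'.mono hsubx).mono (by rw [Set.uIcc_of_le hx0])).intervalIntegrable
  have hint2 : IntervalIntegrable (fun t => (δ+2) * (|w t| ^ (δ+1) * |w' t|)) volume 0 x :=
    ((hG'.mono hsubx).mono (by rw [Set.uIcc_of_le hx0])).intervalIntegrable
  have hint3 : IntervalIntegrable (fun t => (δ+2) * (|w t| ^ (δ+1) * |w' t|)) volume x 1 :=
    ((hG'.mono (Set.Icc_subset_Icc hx0 le_rfl)).mono
      (by rw [Set.uIcc_of_le hx1])).intervalIntegrable
  have step1 : |w x| ^ (δ + 2) ≤ ∫ t in (0:ℝ)..x, (δ+2) * (|w t| ^ (δ+1) * |w' t|) := by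
    rw [← habs_eq x]
    calc (w x ^ 2) ^ p = (w x ^ 2) ^ p - (w 0 ^ 2) ^ p := by rw [hzero]; ring
      _ = ∫ t in (0:ℝ)..x, (δ+2) * ((w t ^ 2) ^ (δ/2)) * (w t * w' t) := hFTC.symm
      _ ≤ _ := intervalIntegral.integral_mono_on hx0 hint1 hint2 hpt
  have step2 : (∫ t in (0:ℝ)..x, (δ+2) * (|w t| ^ (δ+1) * |w' t|))
      ≤ ∫ t in (0:ℝ)..1, (δ+2) * (|w t| ^ (δ+1) * |w' t|) := by
    rw [← intervalIntegral.integral_add_adjacent_intervals hint2 hint3]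
    have : 0 ≤ ∫ t in x..(1:ℝ), (δ+2) * (|w t| ^ (δ+1) * |w' t|) := by
      apply intervalIntegral.integral_nonneg hx1
      intro t ht
      positivity
    linarith
  -- Cauchy–Schwarz
  set A := ∫ y in (0:ℝ)..1, |w y| ^ (2 * (δ + 1)) with hA
  set B := ∫ y in (0:ℝ)..1, (w' y) ^ 2 with hB
  have hA0 : 0 ≤ A := by
    apply intervalIntegral.integral_nonneg (by norm_num)
    intro t ht; positivity
  have hB0 : 0 ≤ B := by
    apply intervalIntegral.integral_nonneg (by norm_num)
    intro t ht; positivity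
  have hCS : (∫ y in (0:ℝ)..1, |w y| ^ (δ+1) * |w' y|) ≤ A ^ ((1:ℝ)/2) * B ^ ((1:ℝ)/2) := by
    have := cs_interval (fun t => |w t| ^ (δ+1)) (fun t => |w' t|) hG hcont.abs
      (fun t => Real.rpow_nonneg (abs_nonneg _) _) (fun t => abs_nonneg _)
    convert this using 3
    · apply intervalIntegral.integral_congr
      intro t ht
      show |w t| ^ (2*(δ+1)) = (|w t| ^ (δ+1)) ^ (2:ℕ)
      rw [sq, ← Real.rpow_add' (abs_nonneg _) (by positivity)]
      ring_nf
    · apply intervalIntegral.integral_congr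
      intro t ht
      show w' t ^ 2 = |w' t| ^ (2:ℕ)
      rw [sq_abs]
  have main : |w x| ^ (δ + 2) ≤ (δ+2) * (A ^ ((1:ℝ)/2) * B ^ ((1:ℝ)/2)) := by
    calc |w x| ^ (δ + 2) ≤ ∫ t in (0:ℝ)..x, (δ+2) * (|w t| ^ (δ+1) * |w' t|) := step1
      _ ≤ ∫ t in (0:ℝ)..1, (δ+2) * (|w t| ^ (δ+1) * |w' t|) := step2
      _ = (δ+2) * ∫ t in (0:ℝ)..1, |w t| ^ (δ+1) * |w' t| :=
          intervalIntegral.integral_const_mul _ _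
      _ ≤ (δ+2) * (A ^ ((1:ℝ)/2) * B ^ ((1:ℝ)/2)) :=
          mul_le_mul_of_nonneg_left hCS (le_of_lt hδ2)
  -- take (δ+2)-th roots
  have final : |w x| ≤ ((δ+2) * (A ^ ((1:ℝ)/2) * B ^ ((1:ℝ)/2))) ^ ((1:ℝ)/(δ+2)) := by
    have h1 : |w x| = (|w x| ^ (δ+2)) ^ ((1:ℝ)/(δ+2)) := by
      rw [← Real.rpow_mul (abs_nonneg _), mul_one_div, div_self (ne_of_gt hδ2), Real.rpow_one]
    rw [h1]
    exact Real.rpow_le_rpow (Real.rpow_nonneg (abs_nonneg _) _) main (by positivity)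
  calc |w x| ≤ ((δ+2) * (A ^ ((1:ℝ)/2) * B ^ ((1:ℝ)/2))) ^ ((1:ℝ)/(δ+2)) := final
    _ = (δ+2) ^ ((1:ℝ)/(δ+2)) * ((A ^ ((1:ℝ)/2)) ^ ((1:ℝ)/(δ+2)) *
        (B ^ ((1:ℝ)/2)) ^ ((1:ℝ)/(δ+2))) := by
        rw [Real.mul_rpow (le_of_lt hδ2) (by positivity),
          Real.mul_rpow (by positivity) (by positivity)]
    _ = _ := by
        have hAe : (A ^ ((1:ℝ)/2)) ^ ((1:ℝ)/(δ+2)) = (A ^ (1/(2*(δ+1)))) ^ ((δ+1)/(δ+2)) := by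
          rw [← Real.rpow_mul hA0, ← Real.rpow_mul hA0]
          congr 1
          field_simp
        rw [hAe]; ring
end

section
/- Let g₁ ∈ C(ℝ) with g₁(0)=0. Then the set X = {u ∈ H²(0,1) : u(0)=0, u'(1)=−g₁(u(1))} is dense in Y = {u ∈ H¹(0,1) : u(0)=0} with respect to the H¹ norm. -/
open MeasureTheory Set Polynomial
open scoped ENNReal

lemma polyeval_contDiff (p : ℝ[X]) {n : WithTop ℕ∞} : ContDiff ℝ n fun x : ℝ => p.eval x := by
  induction p using Polynomial.induction_on' with
  | add p q hp hq => simpa [Polynomial.eval_add] using hp.add hq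
  | monomial k a =>
      simpa [Polynomial.eval_monomial] using (contDiff_const (c := a)).mul (contDiff_id.pow k)

set_option maxHeartbeats 2000000 in
/-- Density of `X = {u ∈ H²(0,1) : u(0)=0, u'(1)=−g₁(u(1))}` in
`Y = {u ∈ H¹(0,1) : u(0)=0}` for the `H¹`-norm: any `v ∈ Y` (represented as the
indefinite integral of its weak derivative `v' ∈ L²(0,1)`) can be approximated in the
`H¹`-norm by functions `z` of class `C²` satisfying `z(0)=0` and `z'(1) = −g₁(z(1))`. -/
theorem density_boundary_condition_set (g₁ : ℝ → ℝ) (hg₁ : Continuous g₁) (hg₁0 : g₁ 0 = 0)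
    (v v' : ℝ → ℝ)
    (hv'int : IntervalIntegrable v' MeasureTheory.volume 0 1)
    (hv'L2 : IntervalIntegrable (fun x => (v' x) ^ 2) MeasureTheory.volume 0 1)
    (hrep : ∀ x ∈ Set.Icc (0 : ℝ) 1, v x = ∫ t in (0 : ℝ)..x, v' t) :
    ∀ ε > 0, ∃ z : ℝ → ℝ, ContDiff ℝ 2 z ∧ z 0 = 0 ∧ deriv z 1 = -g₁ (z 1) ∧
      (∫ x in (0 : ℝ)..1, (v x - z x) ^ 2) +
        (∫ x in (0 : ℝ)..1, (v' x - deriv z x) ^ 2) < ε := by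
  intro ε hε
  set μ := volume.restrict (Ioc (0:ℝ) 1) with hμdef
  haveI : μ.Regular := MeasureTheory.Measure.Regular.restrict_of_measure_ne_top (by simp)
  set δ : ℝ := ε/8 with hδdef
  have hδ : 0 < δ := by positivity
  clear_value δ
  -- basic membership facts
  have hv'meas : AEStronglyMeasurable v' μ := hv'int.1.aestronglyMeasurable
  have hv'2 : MemLp v' 2 μ := (memLp_two_iff_integrable_sq hv'meas).2 hv'L2.1
  have memcont : ∀ f : ℝ → ℝ, Continuous f → MemLp f 2 μ := fun f hf =>
    (memLp_two_iff_integrable_sq hf.aestronglyMeasurable).2 ((hf.pow 2).intervalIntegrable 0 1).1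
  have sqint : ∀ f : ℝ → ℝ, MemLp f 2 μ → Integrable (fun x => f x ^ 2) μ := fun f hf =>
    (memLp_two_iff_integrable_sq hf.aestronglyMeasurable).1 hf
  clear_value μ
  -- Step A: continuous approximation of v' in L²
  have hv'2' : MemLp v' (ENNReal.ofReal 2) μ := by
    rw [show ENNReal.ofReal 2 = 2 by norm_num]; exact hv'2
  obtain ⟨g, -, hg_close, hg_cont, hg_mem⟩ :=
    hv'2'.exists_hasCompactSupport_integral_rpow_sub_le two_pos (ε := δ/4) (by positivity)
  have hg2 : MemLp g 2 μ := memcont g hg_cont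
  have hg_close' : (∫ x, (v' x - g x) ^ 2 ∂μ) ≤ δ/4 := by
    refine le_trans (le_of_eq (integral_congr_ae (ae_of_all _ fun x => ?_))) hg_close
    show (v' x - g x) ^ 2 = ‖v' x - g x‖ ^ (2:ℝ)
    rw [show (2:ℝ) = ((2:ℕ):ℝ) by norm_num, Real.rpow_natCast, Real.norm_eq_abs, sq_abs]
  -- Step B: polynomial approximation of g uniformly
  obtain ⟨p, hp⟩ := exists_polynomial_near_of_continuousOn 0 1 g hg_cont.continuousOn
    (Real.sqrt (δ/4)) (by positivity)
  have hpec : Continuous fun x : ℝ => p.eval x := (polyeval_contDiff p (n := 1)).continuous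
  have hpe2 : MemLp (fun x : ℝ => p.eval x) 2 μ := memcont _ hpec
  have hh2 : MemLp (fun x => v' x - p.eval x) 2 μ := hv'2.sub hpe2
  have hhsq_int : Integrable (fun x => (v' x - p.eval x) ^ 2) μ := sqint _ hh2
  set D : ℝ := ∫ x, (v' x - p.eval x) ^ 2 ∂μ with hDdef
  have hD0 : 0 ≤ D := integral_nonneg fun x => sq_nonneg _
  have hD : D ≤ δ := by
    have hvg_int : Integrable (fun x => (v' x - g x) ^ 2) μ := sqint _ (hv'2.sub hg2)
    have hgp_int : Integrable (fun x => (g x - p.eval x) ^ 2) μ :=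
      sqint _ (memcont _ (hg_cont.sub hpec))
    have hgp : (∫ x, (g x - p.eval x) ^ 2 ∂μ) ≤ δ/4 := by
      have hb : ∀ x ∈ Ioc (0:ℝ) 1, (g x - p.eval x) ^ 2 ≤ δ/4 := by
        intro x hx
        have h1 := le_of_lt (hp x (Ioc_subset_Icc_self hx))
        have h2 : Real.sqrt (δ/4) * Real.sqrt (δ/4) = δ/4 := Real.mul_self_sqrt (by positivity)
        nlinarith [sq_abs (p.eval x - g x), abs_nonneg (p.eval x - g x),
          Real.sqrt_nonneg (δ/4)]
      calc (∫ x, (g x - p.eval x) ^ 2 ∂μ) ≤ ∫ _x in Ioc (0:ℝ) 1, δ/4 := by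
            rw [hμdef]
            exact setIntegral_mono_on (by rw [hμdef] at hgp_int; exact hgp_int)
              (by simp) measurableSet_Ioc hb
        _ = δ/4 := by simp [Real.volume_Ioc]
    calc D ≤ ∫ x, (2*(v' x - g x)^2 + 2*(g x - p.eval x)^2) ∂μ := by
          refine integral_mono hhsq_int ((hvg_int.const_mul 2).add (hgp_int.const_mul 2))
            fun x => ?_
          simp only
          nlinarith [sq_nonneg (v' x - g x - (g x - p.eval x))]
      _ = 2*(∫ x, (v' x - g x)^2 ∂μ) + 2*(∫ x, (g x - p.eval x)^2 ∂μ) := by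
          rw [integral_add (hvg_int.const_mul 2) (hgp_int.const_mul 2),
            integral_const_mul, integral_const_mul]
      _ ≤ 2*(δ/4) + 2*(δ/4) := by gcongr
      _ = δ := by ring
  clear_value D
  -- primitives
  set vt : ℝ → ℝ := fun x => ∫ t in (0:ℝ)..x, v' t with hvtdef
  set P : ℝ → ℝ := fun x => ∫ t in (0:ℝ)..x, p.eval t with hPdef
  have hvtc : ContinuousOn vt (Icc 0 1) := by
    have := intervalIntegral.continuousOn_primitive_interval' hv'int
      (by rw [uIcc_of_le (zero_le_one' ℝ)]; exact ⟨le_refl (0:ℝ), zero_le_one⟩)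
    rwa [uIcc_of_le (zero_le_one' ℝ)] at this
  have hPd : ∀ x, HasDerivAt P (p.eval x) x := fun x =>
    (hpec.integral_hasStrictDerivAt 0 x).hasDerivAt
  have hPc : Continuous P := Differentiable.continuous fun x => (hPd x).differentiableAt
  clear_value vt P
  -- interval integrability facts
  have hhint : IntervalIntegrable (fun x => v' x - p.eval x) volume 0 1 :=
    hv'int.sub (hpec.intervalIntegrable 0 1)
  have hhsqint : IntervalIntegrable (fun x => (v' x - p.eval x) ^ 2) volume 0 1 :=
    (intervalIntegrable_iff_integrableOn_Ioc_of_le zero_le_one).2 (by rw [hμdef] at hhsq_int; exact hhsq_int)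
  have hDeq : (∫ x in (0:ℝ)..1, (v' x - p.eval x) ^ 2) = D := by
    rw [intervalIntegral.integral_of_le (zero_le_one' ℝ), hDdef, hμdef]
  -- pointwise bound on vt - P
  set s : ℝ := Real.sqrt δ with hsdef
  have hs : 0 < s := Real.sqrt_pos.2 hδ
  have hss : s * s = δ := Real.mul_self_sqrt hδ.le
  clear_value s
  have key : ∀ x ∈ Icc (0:ℝ) 1, |vt x - P x| ≤ s := by
    intro x hx
    have e : vt x - P x = ∫ t in (0:ℝ)..x, (v' t - p.eval t) := by
      rw [hvtdef, hPdef]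
      have hsub : IntervalIntegrable v' volume 0 x := by
        refine hv'int.mono_set ?_
        rw [uIcc_of_le hx.1, uIcc_of_le (zero_le_one' ℝ)]
        exact Icc_subset_Icc le_rfl hx.2
      rw [intervalIntegral.integral_sub hsub (hpec.intervalIntegrable 0 x)]
    rw [e]
    calc |∫ t in (0:ℝ)..x, (v' t - p.eval t)|
        ≤ ∫ t in (0:ℝ)..x, |v' t - p.eval t| :=
          intervalIntegral.abs_integral_le_integral_abs hx.1
      _ ≤ ∫ t in (0:ℝ)..1, |v' t - p.eval t| :=
          intervalIntegral.integral_mono_interval le_rfl hx.1 hx.2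
            (ae_of_all _ fun t => abs_nonneg _) hhint.abs
      _ ≤ ∫ t in (0:ℝ)..1, ((v' t - p.eval t)^2 / (2*s) + s/2) := by
          refine intervalIntegral.integral_mono_on zero_le_one hhint.abs
            ((hhsqint.div_const (2*s)).add intervalIntegrable_const) fun t _ => ?_
          have h2s : (0:ℝ) < 2*s := by positivity
          have h1 : |v' t - p.eval t| ≤ ((v' t - p.eval t)^2 + s*s) / (2*s) := by
            rw [le_div_iff₀ h2s]
            nlinarith [sq_nonneg (|v' t - p.eval t| - s), sq_abs (v' t - p.eval t)]
          have h2 : ((v' t - p.eval t)^2 + s*s) / (2*s)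
              = (v' t - p.eval t)^2/(2*s) + s/2 := by field_simp
          rw [h2] at h1; exact h1
      _ = D/(2*s) + s/2 := by
          rw [intervalIntegral.integral_add (hhsqint.div_const _) intervalIntegrable_const,
            intervalIntegral.integral_div, intervalIntegral.integral_const, hDeq]
          norm_num
      _ ≤ δ/(2*s) + s/2 := by gcongr
      _ = s := by
          rw [← hss]; field_simp; ring
  have hsqb : ∀ x ∈ Icc (0:ℝ) 1, (vt x - P x)^2 ≤ δ := fun x hx => by
    nlinarith [key x hx, sq_abs (vt x - P x), abs_nonneg (vt x - P x)]
  -- the correction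
  set c : ℝ := p.eval 1 + g₁ (P 1) with hcdef
  clear_value c
  obtain ⟨k, hk⟩ := exists_nat_gt (8 * c^2 / ε)
  have hk1 : 4*c^2/((k:ℝ)+1) < ε/2 := by
    have hk0 : (0:ℝ) < (k:ℝ)+1 := by positivity
    rw [div_lt_iff₀ hk0]
    have h8 : 8*c^2/ε < (k:ℝ)+1 := lt_of_lt_of_le hk (by linarith)
    have h9 := (div_lt_iff₀ hε).1 h8
    nlinarith [h9]
  set ψ : ℝ → ℝ := fun x => (1-x) * x^(k+1) with hψdef
  set q : ℝ → ℝ := fun x => ((k:ℝ)+1)*x^k - ((k:ℝ)+2)*x^(k+1) with hqdef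
  have hψd : ∀ x, HasDerivAt ψ (q x) x := by
    intro x
    have h1 : HasDerivAt (fun x : ℝ => 1 - x) (-1) x := (hasDerivAt_id x).const_sub 1
    have h2 : HasDerivAt (fun x : ℝ => x ^ (k+1)) (((k:ℝ)+1) * x ^ k) x := by
      simpa using hasDerivAt_pow (k+1) x
    have h3 : HasDerivAt (fun x : ℝ => (1 - x) * x ^ (k+1))
        (-1 * x ^ (k+1) + (1 - x) * (((k:ℝ)+1) * x ^ k)) x := h1.mul h2
    convert h3 using 1
    show ((k:ℝ)+1)*x^k - ((k:ℝ)+2)*x^(k+1) = _; ring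
  have hqc : Continuous q := by rw [hqdef]; fun_prop
  set z : ℝ → ℝ := fun x => P x + c * ψ x with hzdef
  have hzD : ∀ x, HasDerivAt z (p.eval x + c * q x) x := fun x =>
    (hPd x).add ((hψd x).const_mul c)
  have hderiv : deriv z = fun x => p.eval x + c * q x := funext fun x => (hzD x).deriv
  have hzc : Continuous z := Differentiable.continuous fun x => (hzD x).differentiableAt
  clear_value ψ q z
  refine ⟨z, ?_, ?_, ?_, ?_⟩
  · -- C²
    rw [show (2 : WithTop ℕ∞) = 1 + 1 by norm_num]
    refine contDiff_succ_iff_deriv.2 ⟨fun x => (hzD x).differentiableAt, by simp, ?_⟩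
    rw [hderiv, hqdef]
    exact (polyeval_contDiff p).add (contDiff_const.mul
      ((contDiff_const.mul (contDiff_id.pow k)).sub (contDiff_const.mul (contDiff_id.pow (k+1)))))
  · -- z 0 = 0
    rw [hzdef]
    simp [hψdef, hPdef, intervalIntegral.integral_same]
  · -- boundary condition
    have hz1 : z 1 = P 1 := by simp only [hzdef]; simp [hψdef]
    rw [hderiv, hz1]
    show p.eval 1 + c * q 1 = -g₁ (P 1)
    have hq1 : q 1 = -1 := by simp only [hqdef]; simp; ring
    rw [hq1, hcdef]; ring
  · -- the estimate
    have huIcc : uIcc (0:ℝ) 1 = Icc 0 1 := uIcc_of_le zero_le_one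
    have e1 : (∫ x in (0:ℝ)..1, (v x - z x)^2) = ∫ x in (0:ℝ)..1, (vt x - z x)^2 := by
      refine intervalIntegral.integral_congr fun x hx => ?_
      rw [huIcc] at hx
      rw [hrep x hx, hvtdef]
    have hI1 : IntervalIntegrable (fun x => (vt x - z x)^2) volume 0 1 := by
      apply ContinuousOn.intervalIntegrable
      rw [huIcc]
      exact (hvtc.sub hzc.continuousOn).pow 2
    have hRHS1 : IntervalIntegrable (fun x : ℝ => 2*δ + 2*c^2 * x^(2*k+2)) volume 0 1 := by
      apply Continuous.intervalIntegrable; fun_prop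
    have epow0 : (∫ x in (0:ℝ)..1, x^(2*k)) = 1/(2*(k:ℝ)+1) := by
      rw [integral_pow, one_pow, zero_pow (by omega : 2*k+1 ≠ 0)]
      push_cast; ring
    have epow1 : (∫ x in (0:ℝ)..1, x^(2*k+1)) = 1/(2*(k:ℝ)+2) := by
      rw [integral_pow, one_pow, zero_pow (by omega : 2*k+1+1 ≠ 0)]
      push_cast; ring
    have epow2 : (∫ x in (0:ℝ)..1, x^(2*k+2)) = 1/(2*(k:ℝ)+3) := by
      rw [integral_pow, one_pow, zero_pow (by omega : 2*k+2+1 ≠ 0)]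
      push_cast; ring
    have hK : (0:ℝ) ≤ (k:ℝ) := Nat.cast_nonneg k
    have t1 : (∫ x in (0:ℝ)..1, (vt x - z x)^2) ≤ 2*δ + 2*c^2/((k:ℝ)+1) := by
      have step : (∫ x in (0:ℝ)..1, (vt x - z x)^2)
          ≤ ∫ x in (0:ℝ)..1, (2*δ + 2*c^2 * x^(2*k+2)) := by
        refine intervalIntegral.integral_mono_on zero_le_one hI1 hRHS1 fun x hx => ?_
        have hb := hsqb x hx
        have hψ2 : (ψ x)^2 ≤ x^(2*k+2) := by
          have h1 : (ψ x)^2 = (1-x)^2 * x^(2*k+2) := by simp only [hψdef]; ring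
          have h2 : (1-x)^2 ≤ 1 := by nlinarith [hx.1, hx.2]
          have h3 : (0:ℝ) ≤ x^(2*k+2) := pow_nonneg hx.1 _
          nlinarith
        have hbb : (c * ψ x)^2 ≤ c^2 * x^(2*k+2) := by
          calc (c * ψ x)^2 = c^2 * (ψ x)^2 := by ring
            _ ≤ c^2 * x^(2*k+2) := mul_le_mul_of_nonneg_left hψ2 (sq_nonneg c)
        have hzz : vt x - z x = (vt x - P x) - c * ψ x := by simp only [hzdef]; ring
        rw [hzz]
        nlinarith [sq_nonneg (vt x - P x + c * ψ x), hb, hbb]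
      have comp : (∫ x in (0:ℝ)..1, (2*δ + 2*c^2 * x^(2*k+2)))
          = 2*δ + 2*c^2 * (1/(2*(k:ℝ)+3)) := by
        rw [intervalIntegral.integral_add intervalIntegrable_const
          ((by fun_prop : Continuous fun x:ℝ => 2*c^2 * x^(2*k+2)).intervalIntegrable 0 1),
          intervalIntegral.integral_const, intervalIntegral.integral_const_mul, epow2]
        simp [smul_eq_mul]
      have rel : 2*δ + 2*c^2 * (1/(2*(k:ℝ)+3)) ≤ 2*δ + 2*c^2/((k:ℝ)+1) := by
        have h1 : (0:ℝ) < (k:ℝ)+1 := by positivity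
        have h2 : 1/(2*(k:ℝ)+3) ≤ 1/((k:ℝ)+1) :=
          one_div_le_one_div_of_le h1 (by linarith [hK])
        have h3 := mul_le_mul_of_nonneg_left h2 (by positivity : (0:ℝ) ≤ 2*c^2)
        calc 2*δ + 2*c^2 * (1/(2*(k:ℝ)+3)) ≤ 2*δ + 2*c^2 * (1/((k:ℝ)+1)) := by linarith
          _ = 2*δ + 2*c^2/((k:ℝ)+1) := by rw [mul_one_div]
      linarith [step, le_of_eq comp, rel]
    -- second term
    have e2 : (∫ x in (0:ℝ)..1, (v' x - deriv z x)^2)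
        = ∫ x in (0:ℝ)..1, ((v' x - p.eval x) - c * q x)^2 := by
      refine intervalIntegral.integral_congr fun x _ => ?_
      rw [hderiv]
      show (v' x - (p.eval x + c * q x))^2 = ((v' x - p.eval x) - c * q x)^2
      ring
    have hI2 : IntervalIntegrable (fun x => ((v' x - p.eval x) - c * q x)^2) volume 0 1 := by
      refine (intervalIntegrable_iff_integrableOn_Ioc_of_le zero_le_one).2 ?_
      have hmm : MemLp (fun x => v' x - p.eval x - c * q x) 2 μ := by
        have h5 := hh2.sub (memcont _ (continuous_const.mul hqc) :
          MemLp (fun x => c * q x) 2 μ)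
        exact h5
      have hint : Integrable (fun x => (v' x - p.eval x - c * q x) ^ 2) μ := sqint _ hmm
      rw [hμdef] at hint
      exact hint
    have hRHS2 : IntervalIntegrable (fun x => 2*(v' x - p.eval x)^2 + 2*c^2*(q x)^2) volume 0 1 :=
      (hhsqint.const_mul 2).add
        ((by fun_prop : Continuous fun x => 2*c^2*(q x)^2).intervalIntegrable 0 1)
    -- J bound
    have i1 : IntervalIntegrable (fun x:ℝ => ((k:ℝ)+1)^2 * x^(2*k)) volume 0 1 := by
      apply Continuous.intervalIntegrable; fun_prop
    have i2 : IntervalIntegrable (fun x:ℝ => (2*((k:ℝ)+1)*((k:ℝ)+2)) * x^(2*k+1)) volume 0 1 := by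
      apply Continuous.intervalIntegrable; fun_prop
    have i3 : IntervalIntegrable (fun x:ℝ => ((k:ℝ)+2)^2 * x^(2*k+2)) volume 0 1 := by
      apply Continuous.intervalIntegrable; fun_prop
    have hJ : (∫ x in (0:ℝ)..1, (q x)^2) ≤ 1/((k:ℝ)+1) := by
      have expand : (∫ x in (0:ℝ)..1, (q x)^2)
          = ∫ x in (0:ℝ)..1, (((k:ℝ)+1)^2 * x^(2*k) - (2*((k:ℝ)+1)*((k:ℝ)+2)) * x^(2*k+1)
              + ((k:ℝ)+2)^2 * x^(2*k+2)) := by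
        refine intervalIntegral.integral_congr fun x _ => ?_
        simp only [hqdef]; ring
      rw [expand, intervalIntegral.integral_add (i1.sub i2) i3,
        intervalIntegral.integral_sub i1 i2, intervalIntegral.integral_const_mul,
        intervalIntegral.integral_const_mul, intervalIntegral.integral_const_mul,
        epow0, epow1, epow2]
      have heq : ((k:ℝ)+1)^2 * (1/(2*(k:ℝ)+1)) - 2*((k:ℝ)+1)*((k:ℝ)+2) * (1/(2*(k:ℝ)+2))
          + ((k:ℝ)+2)^2 * (1/(2*(k:ℝ)+3))
          = ((k:ℝ)+1)/((2*(k:ℝ)+1)*(2*(k:ℝ)+3)) := by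
        field_simp
        ring
      have hle : ((k:ℝ)+1)/((2*(k:ℝ)+1)*(2*(k:ℝ)+3)) ≤ 1/((k:ℝ)+1) := by
        rw [div_le_div_iff₀ (by positivity) (by positivity)]
        nlinarith
      rw [heq]
      exact hle
    have t2 : (∫ x in (0:ℝ)..1, ((v' x - p.eval x) - c * q x)^2)
        ≤ 2*δ + 2*c^2/((k:ℝ)+1) := by
      have step : (∫ x in (0:ℝ)..1, ((v' x - p.eval x) - c * q x)^2)
          ≤ ∫ x in (0:ℝ)..1, (2*(v' x - p.eval x)^2 + 2*c^2*(q x)^2) := by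
        refine intervalIntegral.integral_mono_on zero_le_one hI2 hRHS2 fun x _ => ?_
        nlinarith [sq_nonneg (v' x - p.eval x + c * q x)]
      have comp : (∫ x in (0:ℝ)..1, (2*(v' x - p.eval x)^2 + 2*c^2*(q x)^2))
          = 2*D + 2*c^2*(∫ x in (0:ℝ)..1, (q x)^2) := by
        rw [intervalIntegral.integral_add (hhsqint.const_mul 2)
          ((by fun_prop : Continuous fun x => 2*c^2*(q x)^2).intervalIntegrable 0 1),
          intervalIntegral.integral_const_mul, intervalIntegral.integral_const_mul, hDeq]
      have h3 := mul_le_mul_of_nonneg_left hJ (by positivity : (0:ℝ) ≤ 2*c^2)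
      rw [mul_one_div] at h3
      linarith [step, le_of_eq comp, hD, h3]
    rw [e1, e2]
    have : 2*c^2/((k:ℝ)+1) + 2*c^2/((k:ℝ)+1) = 4*c^2/((k:ℝ)+1) := by ring
    have hsum := add_le_add t1 t2
    rw [hδdef] at hsum
    linarith [hk1, hsum]
end

section
/- Let u, v ∈ H³(0,1) satisfy u(0)=v(0)=0, u'(1)=−g₁(u(1)), v'(1)=−g₁(v(1)), u''(1)=g₂(u(1)), v''(1)=g₂(v(1)), where g₁(k) = (1/ν)(η + (α²/(η(δ+2)²)) k^{2δ}) k and g₂(k) = (δ/ν²)(η + (α²/(η(δ+2)²)) k^{2δ})² k with ν, η, α > 0 and δ ≥ 1 an odd integer. Then ∫₀¹ (u−v)'''(x) (u(x)−v(x)) dx ≥ 0. -/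
open MeasureTheory Set intervalIntegral

private lemma cs_mono (d : ℝ) (hd : 0 ≤ d) (f g F G : ℝ → ℝ) (a b : ℝ) (hba : b ≤ a)
    (hfc : Continuous f) (hgc : Continuous g)
    (hF : ∀ t : ℝ, HasDerivAt F (f t) t) (hG : ∀ t : ℝ, HasDerivAt G (g t) t)
    (hpt : ∀ t : ℝ, (f t)^2 ≤ 2*d*(g t)) :
    (F a - F b)^2 ≤ 2*d*(a-b)*(G a - G b) := by
  have hJ : (∫ t in b..a, f t) = F a - F b :=
    integral_eq_sub_of_hasDerivAt (fun t _ => hF t) (hfc.intervalIntegrable b a)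
  have hK : (∫ t in b..a, g t) = G a - G b :=
    integral_eq_sub_of_hasDerivAt (fun t _ => hG t) (hgc.intervalIntegrable b a)
  set J := F a - F b with hJd
  set K := G a - G b with hKd
  set I := ∫ t in b..a, (f t)^2 with hI
  have hCS : (a-b)*J^2 ≤ (a-b)^2*I := by
    have h0 : 0 ≤ ∫ t in b..a, ((a-b)*f t - J)^2 :=
      integral_nonneg hba (fun t _ => sq_nonneg _)
    have h1 : (∫ t in b..a, ((a-b)*f t - J)^2)
        = ∫ t in b..a, ((a-b)^2*(f t)^2 - (2*(a-b)*J)*(f t) + J^2) :=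
      intervalIntegral.integral_congr (fun t _ => by ring)
    have h2 : (∫ t in b..a, ((a-b)^2*(f t)^2 - (2*(a-b)*J)*(f t) + J^2))
        = (a-b)^2*I - (2*(a-b)*J)*J + (a-b)*J^2 := by
      rw [intervalIntegral.integral_add
            ((((by fun_prop : Continuous fun t => f t ^ 2).intervalIntegrable b a).const_mul _).sub
              ((hfc.intervalIntegrable b a).const_mul _))
            intervalIntegrable_const,
          intervalIntegral.integral_sub
            (((by fun_prop : Continuous fun t => f t ^ 2).intervalIntegrable b a).const_mul _)
            ((hfc.intervalIntegrable b a).const_mul _),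
          intervalIntegral.integral_const_mul, intervalIntegral.integral_const_mul,
          intervalIntegral.integral_const, hJ, smul_eq_mul]
    rw [h1, h2] at h0
    nlinarith [h0]
  have hmono : I ≤ 2*d*K := by
    have h2 : (∫ t in b..a, 2*d*(g t)) = 2*d*K := by
      rw [intervalIntegral.integral_const_mul, hK]
    rw [hI, ← h2]
    exact intervalIntegral.integral_mono_on hba
      ((hfc.pow 2).intervalIntegrable b a)
      ((hgc.intervalIntegrable b a).const_mul _)
      (fun t _ => hpt t)
  rcases eq_or_lt_of_le hba with h | h
  · simp [hJd, h]
  · have hab : 0 < a - b := sub_pos.2 h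
    have h3 : (a-b)*J^2 ≤ (a-b)*(2*d*(a-b)*K) := by
      calc (a-b)*J^2 ≤ (a-b)^2*I := hCS
        _ ≤ (a-b)^2*(2*d*K) := mul_le_mul_of_nonneg_left hmono (by positivity)
        _ = (a-b)*(2*d*(a-b)*K) := by ring
    exact le_of_mul_le_mul_left h3 hab

private lemma ptwise (d η s : ℝ) (hd : 1 ≤ d) (hη : 0 < η) (hs : 0 ≤ s) :
    (η + (2*d+1)*s)^2 ≤ 2*d*(η^2 + 2*(2*d+1)*η*s + (4*d+1)*s^2) := by
  nlinarith [mul_nonneg hs hη.le, mul_nonneg hs hs,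
    mul_nonneg (sub_nonneg.2 hd) (mul_nonneg hs hs),
    mul_nonneg (sub_nonneg.2 hd) (mul_nonneg hs hη.le), sq_nonneg η]

private lemma core_le_aux (δ : ℕ) (hδ : 1 ≤ δ) (η c a b : ℝ) (hη : 0 < η) (hc : 0 ≤ c)
    (hba : b ≤ a) :
    ((η*a + c*a^(2*δ+1)) - (η*b + c*b^(2*δ+1)))^2
      ≤ 2*(δ:ℝ)*(a-b)*((η^2*a + 2*η*c*a^(2*δ+1) + c^2*a^(4*δ+1))
          - (η^2*b + 2*η*c*b^(2*δ+1) + c^2*b^(4*δ+1))) := by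
  have hd1 : (1:ℝ) ≤ (δ:ℝ) := Nat.one_le_cast.mpr hδ
  refine cs_mono (δ:ℝ) (by linarith)
    (fun t => η + c*(((2*δ+1:ℕ):ℝ)*t^(2*δ)))
    (fun t => η^2 + 2*η*c*(((2*δ+1:ℕ):ℝ)*t^(2*δ)) + c^2*(((4*δ+1:ℕ):ℝ)*t^(4*δ)))
    (fun k => η*k + c*k^(2*δ+1))
    (fun k => η^2*k + 2*η*c*k^(2*δ+1) + c^2*k^(4*δ+1))
    a b hba (by fun_prop) (by fun_prop) (fun t => ?_) (fun t => ?_) (fun t => ?_)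
  · have h1 := (hasDerivAt_id t).const_mul η
    have h2 := (hasDerivAt_pow (2*δ+1) t).const_mul c
    have h := h1.add h2
    simp only [Nat.add_sub_cancel] at h
    exact h.congr_deriv (by ring)
  · have h1 := (hasDerivAt_id t).const_mul (η^2)
    have h2 := (hasDerivAt_pow (2*δ+1) t).const_mul (2*η*c)
    have h3 := (hasDerivAt_pow (4*δ+1) t).const_mul (c^2)
    have h := (h1.add h2).add h3
    simp only [Nat.add_sub_cancel] at h
    exact h.congr_deriv (by ring)
  · have ht : (0:ℝ) ≤ t^(2*δ) := by rw [pow_mul]; positivity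
    have hs : 0 ≤ c*t^(2*δ) := mul_nonneg hc ht
    have h := ptwise (δ:ℝ) η (c*t^(2*δ)) hd1 hη hs
    have h4 : t^(4*δ) = (t^(2*δ))^2 := by rw [show 4*δ = (2*δ)*2 by ring, pow_mul]
    have e1 : (η + c*(((2*δ+1:ℕ):ℝ)*t^(2*δ)))^2 = (η + (2*(δ:ℝ)+1)*(c*t^(2*δ)))^2 := by
      push_cast; ring
    have e2 : 2*(δ:ℝ)*(η^2 + 2*η*c*(((2*δ+1:ℕ):ℝ)*t^(2*δ)) + c^2*(((4*δ+1:ℕ):ℝ)*t^(4*δ)))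
        = 2*(δ:ℝ)*(η^2 + 2*(2*(δ:ℝ)+1)*η*(c*t^(2*δ)) + (4*(δ:ℝ)+1)*(c*t^(2*δ))^2) := by
      rw [h4]; push_cast; ring
    rw [e1, e2]; exact h

private lemma core_le (δ : ℕ) (hδ : 1 ≤ δ) (η c a b : ℝ) (hη : 0 < η) (hc : 0 ≤ c) :
    ((η*a + c*a^(2*δ+1)) - (η*b + c*b^(2*δ+1)))^2
      ≤ 2*(δ:ℝ)*(a-b)*((η^2*a + 2*η*c*a^(2*δ+1) + c^2*a^(4*δ+1))
          - (η^2*b + 2*η*c*b^(2*δ+1) + c^2*b^(4*δ+1))) := by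
  rcases le_total b a with h | h
  · exact core_le_aux δ hδ η c a b hη hc h
  · have h' := core_le_aux δ hδ η c b a hη hc h
    nlinarith [h']

/-- Monotonicity of the third-order dispersive term under the nonlinear flux feedback
boundary conditions: `∫₀¹ (u−v)'''(x)(u(x)−v(x)) dx ≥ 0`. -/
theorem third_order_monotone (ν η α : ℝ) (hν : 0 < ν) (hη : 0 < η) (hα : 0 < α)
    (δ : ℕ) (hδ : 1 ≤ δ) (hodd : Odd δ)
    (g₁ g₂ : ℝ → ℝ)
    (hg₁ : ∀ k : ℝ, g₁ k = (1 / ν) * (η + α ^ 2 / (η * ((δ : ℝ) + 2) ^ 2) * k ^ (2 * δ)) * k)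
    (hg₂ : ∀ k : ℝ, g₂ k =
      ((δ : ℝ) / ν ^ 2) * (η + α ^ 2 / (η * ((δ : ℝ) + 2) ^ 2) * k ^ (2 * δ)) ^ 2 * k)
    (u u' u'' u''' v v' v'' v''' : ℝ → ℝ)
    (hu1 : ∀ x ∈ Set.Icc (0 : ℝ) 1, HasDerivAt u (u' x) x)
    (hu2 : ∀ x ∈ Set.Icc (0 : ℝ) 1, HasDerivAt u' (u'' x) x)
    (hu3 : ∀ x ∈ Set.Icc (0 : ℝ) 1, HasDerivAt u'' (u''' x) x)
    (hv1 : ∀ x ∈ Set.Icc (0 : ℝ) 1, HasDerivAt v (v' x) x)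
    (hv2 : ∀ x ∈ Set.Icc (0 : ℝ) 1, HasDerivAt v' (v'' x) x)
    (hv3 : ∀ x ∈ Set.Icc (0 : ℝ) 1, HasDerivAt v'' (v''' x) x)
    (hu'''int : IntervalIntegrable u''' MeasureTheory.volume 0 1)
    (hv'''int : IntervalIntegrable v''' MeasureTheory.volume 0 1)
    (hu0 : u 0 = 0) (hv0 : v 0 = 0)
    (hub1 : u' 1 = -g₁ (u 1)) (hvb1 : v' 1 = -g₁ (v 1))
    (hub2 : u'' 1 = g₂ (u 1)) (hvb2 : v'' 1 = g₂ (v 1)) :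
    (∫ x in (0 : ℝ)..1, (u''' x - v''' x) * (u x - v x)) ≥ 0 := by
  have huIcc : uIcc (0:ℝ) 1 = Icc 0 1 := uIcc_of_le zero_le_one
  -- continuity
  have hwc : ContinuousOn (fun x => u x - v x) (Icc (0:ℝ) 1) :=
    fun x hx => ((hu1 x hx).sub (hv1 x hx)).continuousAt.continuousWithinAt
  have hw'c : ContinuousOn (fun x => u' x - v' x) (Icc (0:ℝ) 1) :=
    fun x hx => ((hu2 x hx).sub (hv2 x hx)).continuousAt.continuousWithinAt
  have hw''c : ContinuousOn (fun x => u'' x - v'' x) (Icc (0:ℝ) 1) :=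
    fun x hx => ((hu3 x hx).sub (hv3 x hx)).continuousAt.continuousWithinAt
  -- integrability
  have hint1 : IntervalIntegrable (fun x => (u''' x - v''' x) * (u x - v x))
      MeasureTheory.volume 0 1 :=
    (hu'''int.sub hv'''int).mul_continuousOn (huIcc ▸ hwc)
  have hint2 : IntervalIntegrable (fun x => (u'' x - v'' x) * (u' x - v' x))
      MeasureTheory.volume 0 1 :=
    (huIcc ▸ (hw''c.mul hw'c)).intervalIntegrable
  -- integration by parts
  have hA : ∀ x ∈ uIcc (0:ℝ) 1, HasDerivAt (fun x => (u'' x - v'' x) * (u x - v x))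
      ((u''' x - v''' x) * (u x - v x) + (u'' x - v'' x) * (u' x - v' x)) x := by
    intro x hx; rw [huIcc] at hx
    exact ((hu3 x hx).sub (hv3 x hx)).mul ((hu1 x hx).sub (hv1 x hx))
  have hparts := integral_eq_sub_of_hasDerivAt hA (hint1.add hint2)
  rw [intervalIntegral.integral_add hint1 hint2] at hparts
  have hB : ∀ x ∈ uIcc (0:ℝ) 1, HasDerivAt (fun x => (u' x - v' x) * (u' x - v' x) / 2)
      ((u'' x - v'' x) * (u' x - v' x)) x := by
    intro x hx; rw [huIcc] at hx
    have h := (((hu2 x hx).sub (hv2 x hx)).mul ((hu2 x hx).sub (hv2 x hx))).div_const 2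
    exact h.congr_deriv (by simp only [Pi.sub_apply]; ring)
  have hpp := integral_eq_sub_of_hasDerivAt hB hint2
  -- the boundary inequality
  have hfin : (g₁ (u 1) - g₁ (v 1))^2 ≤ 2*(u 1 - v 1)*(g₂ (u 1) - g₂ (v 1)) := by
    set c := α^2/(η*((δ:ℝ)+2)^2) with hcdef
    have hc : 0 ≤ c := by positivity
    have h := core_le δ hδ η c (u 1) (v 1) hη hc
    have e1 : ∀ k : ℝ, η*k + c*k^(2*δ+1) = ν * g₁ k := by
      intro k; rw [hg₁]; field_simp; ring
    have e2 : ∀ k : ℝ, (δ:ℝ)*(η^2*k + 2*η*c*k^(2*δ+1) + c^2*k^(4*δ+1)) = ν^2 * g₂ k := by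
      intro k; rw [hg₂]
      have hη2 : η*((δ:ℝ)+2)^2 ≠ 0 := by positivity
      field_simp
      ring
    have h' : (ν*g₁ (u 1) - ν*g₁ (v 1))^2
        ≤ 2*(u 1 - v 1)*(ν^2*g₂ (u 1) - ν^2*g₂ (v 1)) := by
      calc (ν*g₁ (u 1) - ν*g₁ (v 1))^2
          = ((η*(u 1) + c*(u 1)^(2*δ+1)) - (η*(v 1) + c*(v 1)^(2*δ+1)))^2 := by
            rw [e1 (u 1), e1 (v 1)]
        _ ≤ 2*(δ:ℝ)*(u 1 - v 1)*((η^2*(u 1) + 2*η*c*(u 1)^(2*δ+1) + c^2*(u 1)^(4*δ+1))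
              - (η^2*(v 1) + 2*η*c*(v 1)^(2*δ+1) + c^2*(v 1)^(4*δ+1))) := h
        _ = 2*(u 1 - v 1)*((δ:ℝ)*(η^2*(u 1) + 2*η*c*(u 1)^(2*δ+1) + c^2*(u 1)^(4*δ+1))
              - (δ:ℝ)*(η^2*(v 1) + 2*η*c*(v 1)^(2*δ+1) + c^2*(v 1)^(4*δ+1))) := by ring
        _ = 2*(u 1 - v 1)*(ν^2*g₂ (u 1) - ν^2*g₂ (v 1)) := by
            rw [e2 (u 1), e2 (v 1)]
    have hν2 : (0:ℝ) < ν^2 := by positivity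
    refine le_of_mul_le_mul_left ?_ hν2
    calc ν^2*(g₁ (u 1) - g₁ (v 1))^2 = (ν*g₁ (u 1) - ν*g₁ (v 1))^2 := by ring
      _ ≤ 2*(u 1 - v 1)*(ν^2*g₂ (u 1) - ν^2*g₂ (v 1)) := h'
      _ = ν^2*(2*(u 1 - v 1)*(g₂ (u 1) - g₂ (v 1))) := by ring
  -- put it together
  have hgoal : (∫ x in (0:ℝ)..1, (u''' x - v''' x) * (u x - v x))
      = (u'' 1 - v'' 1)*(u 1 - v 1) - (u'' 0 - v'' 0)*(u 0 - v 0)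
        - ((u' 1 - v' 1)*(u' 1 - v' 1)/2 - (u' 0 - v' 0)*(u' 0 - v' 0)/2) := by
    linarith [hparts, hpp]
  rw [hgoal, hu0, hv0, hub1, hvb1, hub2, hvb2]
  nlinarith [hfin, sq_nonneg (u' 0 - v' 0)]
end
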